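/- arXiv:2502.19006 — 2 statements merged into one kernel-verified Lean document; each statement's English description precedes it below -/
import Mathlib

section
/- Monotonicity of the posterior variance against training inputs: let X_t = (x₁, …, x_t) be a finite sequence in X, let S ⊆ {1, …, t}, and let X_S = (x_i)_{i∈S} denote the corresponding subsequence. Then for every x ∈ X and every λ > 0, σ²_{λ²}(x; X_t) ≤ σ²_{λ²}(x; X_S); consequently σ(x; X_t) ≤ σ(x; X_S). -/
open Matrix

noncomputable section

/-- Gram matrix `K = [k(x_i, x_j)]` of the kernel `k` on the finite family `xs`. -/
def gram {X ι : Type*} [Fintype ι] (k : X → X → ℝ) (xs : ι → X) :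
    Matrix ι ι ℝ := fun i j => k (xs i) (xs j)

/-- Kernel vector `k_t(x) = (k(x₁, x), …, k(x_t, x))`. -/
def kvec {X ι : Type*} [Fintype ι] (k : X → X → ℝ) (xs : ι → X) (x : X) :
    ι → ℝ := fun i => k (xs i) x

/-- Regularized posterior variance `σ²_{λ²}(x; xs) = k(x,x) - k_t(x)ᵀ (K + λ² I)⁻¹ k_t(x)`.
For the empty family this is `k(x,x)`. -/
def postVar {X ι : Type*} [Fintype ι] [DecidableEq ι] (k : X → X → ℝ)
    (xs : ι → X) (lam : ℝ) (x : X) : ℝ :=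
  k x x - kvec k xs x ⬝ᵥ ((gram k xs + lam ^ 2 • (1 : Matrix ι ι ℝ))⁻¹ *ᵥ kvec k xs x)

/-- Noise-free posterior standard deviation `σ(x; xs) = inf_{λ > 0} σ_{λ²}(x; xs)`. -/
def postStd {X ι : Type*} [Fintype ι] [DecidableEq ι] (k : X → X → ℝ)
    (xs : ι → X) (x : X) : ℝ :=
  ⨅ lam : {l : ℝ // 0 < l}, Real.sqrt (postVar k xs lam.1 x)

/-- Maximum information gain `γ_T(λ²) = sup_{x₁,…,x_T} (1/2) ln det (I_T + λ⁻² K_T)`,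
a value in `[0, ∞]`. -/
def mig {X : Type*} (k : X → X → ℝ) (T : ℕ) (lam : ℝ) : ENNReal :=
  ⨆ xs : Fin T → X, ENNReal.ofReal
    ((1 / 2) * Real.log ((1 + (lam ^ 2)⁻¹ • gram k xs).det))

/-- The prefix `X_{t-1} = (x₁, …, x_{t-1})` of a finite sequence (`t` is 0-indexed). -/
def pre {X : Type*} {T : ℕ} (xs : Fin T → X) (t : Fin T) : Fin t.1 → X :=
  fun i => xs ⟨i.1, i.2.trans t.2⟩

/-- Noise-free posterior mean `μ(x; xs) = k_t(x)ᵀ K⁻¹ (f(x₁), …, f(x_t))ᵀ`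
(for the empty family this is `0`). -/
def postMean {X ι : Type*} [Fintype ι] [DecidableEq ι] (k : X → X → ℝ)
    (xs : ι → X) (f : X → ℝ) (x : X) : ℝ :=
  kvec k xs x ⬝ᵥ ((gram k xs)⁻¹ *ᵥ fun i => f (xs i))

/-- Noise-free posterior standard deviation in closed form,
`σ(x; xs) = (k(x,x) - k_t(x)ᵀ K⁻¹ k_t(x))^{1/2}` (for the empty family, `k(x,x)^{1/2}`). -/
def postStdInv {X ι : Type*} [Fintype ι] [DecidableEq ι] (k : X → X → ℝ)
    (xs : ι → X) (x : X) : ℝ :=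
  Real.sqrt (k x x - kvec k xs x ⬝ᵥ ((gram k xs)⁻¹ *ᵥ kvec k xs x))

/-- The first `t` points `X_t = (x₁, …, x_t)` of an infinite sequence. -/
def prefN {X : Type*} (xseq : ℕ → X) (t : ℕ) : Fin t → X := fun i => xseq i

lemma gram_posSemidef {X ι : Type*} [Fintype ι] (k : X → X → ℝ)
    (hsym : ∀ x y : X, k x y = k y x)
    (hpsd : ∀ (n : ℕ) (xv : Fin n → X) (c : Fin n → ℝ),
      0 ≤ ∑ i, ∑ j, c i * c j * k (xv i) (xv j))
    (xs : ι → X) : (gram k xs).PosSemidef := by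
  rw [Matrix.posSemidef_iff_dotProduct_mulVec]
  constructor
  · ext i j
    simp [_root_.gram, Matrix.conjTranspose_apply, hsym (xs i) (xs j)]
  · intro c
    have hq : star c ⬝ᵥ (gram k xs *ᵥ c) = ∑ i, ∑ j, c i * c j * k (xs i) (xs j) := by
      simp only [dotProduct, mulVec, _root_.gram, star_trivial, Finset.mul_sum]
      exact Finset.sum_congr rfl fun i _ => Finset.sum_congr rfl fun j _ => by ring
    rw [hq]
    have e := (Fintype.equivFin ι).symm
    calc (0:ℝ) ≤ ∑ i, ∑ j, (c ∘ e) i * (c ∘ e) j * k ((xs ∘ e) i) ((xs ∘ e) j) :=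
          hpsd _ _ _
      _ = ∑ i, ∑ j, c i * c j * k (xs i) (xs j) := by
          rw [← Equiv.sum_comp e (fun i => ∑ j, c i * c j * k (xs i) (xs j))]
          exact Finset.sum_congr rfl fun i _ =>
            Equiv.sum_comp e (fun j => c (e i) * c j * k (xs (e i)) (xs j))

lemma regPosDef {ι : Type*} [Fintype ι] [DecidableEq ι] {G : Matrix ι ι ℝ}
    (hg : G.PosSemidef) {lam : ℝ} (hlam : 0 < lam) :
    (G + lam ^ 2 • (1 : Matrix ι ι ℝ)).PosDef := by
  apply Matrix.PosDef.posSemidef_add hg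
  rw [Matrix.smul_one_eq_diagonal]
  exact Matrix.PosDef.diagonal fun i => by positivity

lemma quad_min {ι : Type*} [Fintype ι] [DecidableEq ι] {A : Matrix ι ι ℝ} (hA : A.PosDef)
    (b c : ι → ℝ) :
    -(b ⬝ᵥ A⁻¹ *ᵥ b) ≤ c ⬝ᵥ A *ᵥ c - 2 * (c ⬝ᵥ b) := by
  have hsym' : ∀ i j, A i j = A j i := by
    intro i j
    conv_lhs => rw [← hA.isHermitian.eq]
    simp [Matrix.conjTranspose_apply]
  have hsymm : ∀ u v : ι → ℝ, u ⬝ᵥ A *ᵥ v = v ⬝ᵥ A *ᵥ u := by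
    intro u v
    simp only [dotProduct, mulVec, Finset.mul_sum]
    rw [Finset.sum_comm]
    exact Finset.sum_congr rfl fun i _ => Finset.sum_congr rfl fun j _ => by
      rw [hsym' j i]; ring
  set m := A⁻¹ *ᵥ b with hm
  have hinv : A * A⁻¹ = 1 := Matrix.mul_nonsing_inv A ((Matrix.isUnit_iff_isUnit_det A).1 hA.isUnit)
  have hAm : A *ᵥ m = b := by rw [hm, mulVec_mulVec, hinv, one_mulVec]
  have hnn : 0 ≤ (c - m) ⬝ᵥ A *ᵥ (c - m) := by
    have := hA.posSemidef.dotProduct_mulVec_nonneg (c - m)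
    simpa using this
  have hexp : (c - m) ⬝ᵥ A *ᵥ (c - m)
      = c ⬝ᵥ A *ᵥ c - 2 * (c ⬝ᵥ b) + b ⬝ᵥ m := by
    rw [mulVec_sub, dotProduct_sub, sub_dotProduct, sub_dotProduct, hAm,
      hsymm m c, hAm]
    have h1 : m ⬝ᵥ b = b ⬝ᵥ m := dotProduct_comm m b
    linarith [h1]
  linarith [hnn, hexp]


/-- Monotonicity of the posterior variance against training inputs. -/
theorem postVar_monotone_in_inputs
    {X : Type*} [Nonempty X] (k : X → X → ℝ)
    (hsym : ∀ x y : X, k x y = k y x)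
    (hpsd : ∀ (n : ℕ) (xv : Fin n → X) (c : Fin n → ℝ),
      0 ≤ ∑ i, ∑ j, c i * c j * k (xv i) (xv j))
    (t : ℕ) (xs : Fin t → X) (S : Finset (Fin t)) (x : X) :
    (∀ lam : ℝ, 0 < lam →
        postVar k xs lam x ≤ postVar k (fun i : {i : Fin t // i ∈ S} => xs i.1) lam x) ∧
      postStd k xs x ≤ postStd k (fun i : {i : Fin t // i ∈ S} => xs i.1) x := by
  set xs' : {i : Fin t // i ∈ S} → X := fun i => xs i.1 with hxs'
  have hpt : ∀ lam : ℝ, 0 < lam →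
      postVar k xs lam x ≤ postVar k xs' lam x := by
    intro lam hlam
    set A : Matrix (Fin t) (Fin t) ℝ := gram k xs + lam ^ 2 • 1 with hAdef
    set B : Matrix {i : Fin t // i ∈ S} {i : Fin t // i ∈ S} ℝ
      := gram k xs' + lam ^ 2 • 1 with hBdef
    have hApd : A.PosDef := regPosDef (gram_posSemidef k hsym hpsd xs) hlam
    have hBpd : B.PosDef := regPosDef (gram_posSemidef k hsym hpsd xs') hlam
    set b : Fin t → ℝ := kvec k xs x with hbdef
    set bS : {i : Fin t // i ∈ S} → ℝ := kvec k xs' x with hbSdef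
    set cS : {i : Fin t // i ∈ S} → ℝ := B⁻¹ *ᵥ bS with hcSdef
    set c : Fin t → ℝ := fun i => if h : i ∈ S then cS ⟨i, h⟩ else 0 with hcdef
    have hcS : ∀ j : {i : Fin t // i ∈ S}, c j.1 = cS j := fun j => dif_pos j.2
    have hczero : ∀ i : Fin t, i ∉ S → c i = 0 := fun i hi => dif_neg hi
    have hAB : ∀ i j : {i : Fin t // i ∈ S}, A i.1 j.1 = B i j := by
      intro i j
      simp only [hAdef, hBdef, Matrix.add_apply, Matrix.smul_apply, Matrix.one_apply,
        _root_.gram, hxs', smul_eq_mul]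
      congr 1
      by_cases h : i = j
      · simp [h]
      · rw [if_neg h, if_neg (fun h' => h (Subtype.ext h'))]
    have h2 : c ⬝ᵥ b = cS ⬝ᵥ bS := by
      show ∑ i, c i * b i = ∑ i, cS i * bS i
      rw [← Finset.sum_subset (Finset.subset_univ S)
          (fun i _ hi => by rw [hczero i hi, zero_mul]),
        ← Finset.sum_coe_sort S (fun i => c i * b i)]
      exact Finset.sum_congr rfl fun i _ => by rw [hcS i]; rfl
    have h1 : c ⬝ᵥ A *ᵥ c = cS ⬝ᵥ B *ᵥ cS := by
      have inner : ∀ i : {i : Fin t // i ∈ S}, (A *ᵥ c) i.1 = (B *ᵥ cS) i := by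
        intro i
        show ∑ j, A i.1 j * c j = ∑ j, B i j * cS j
        rw [← Finset.sum_subset (Finset.subset_univ S)
            (fun j _ hj => by rw [hczero j hj, mul_zero]),
          ← Finset.sum_coe_sort S (fun j => A i.1 j * c j)]
        exact Finset.sum_congr rfl fun j _ => by rw [hAB i j, hcS j]
      show ∑ i, c i * (A *ᵥ c) i = ∑ i, cS i * (B *ᵥ cS) i
      rw [← Finset.sum_subset (Finset.subset_univ S)
          (fun i _ hi => by rw [hczero i hi, zero_mul]),
        ← Finset.sum_coe_sort S (fun i => c i * (A *ᵥ c) i)]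
      exact Finset.sum_congr rfl fun i _ => by rw [hcS i, inner i]
    have hBinv : B * B⁻¹ = 1 :=
      Matrix.mul_nonsing_inv B ((Matrix.isUnit_iff_isUnit_det B).1 hBpd.isUnit)
    have hBcS : B *ᵥ cS = bS := by rw [hcSdef, mulVec_mulVec, hBinv, one_mulVec]
    have hrhs : cS ⬝ᵥ B *ᵥ cS - 2 * (cS ⬝ᵥ bS) = -(bS ⬝ᵥ B⁻¹ *ᵥ bS) := by
      rw [hBcS]
      have : cS ⬝ᵥ bS = bS ⬝ᵥ B⁻¹ *ᵥ bS := by rw [dotProduct_comm]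
      linarith [this]
    have hmin := quad_min hApd b c
    rw [h1, h2, hrhs] at hmin
    show k x x - b ⬝ᵥ A⁻¹ *ᵥ b ≤ k x x - bS ⬝ᵥ B⁻¹ *ᵥ bS
    linarith
  refine ⟨hpt, ?_⟩
  haveI : Nonempty {l : ℝ // 0 < l} := ⟨⟨1, one_pos⟩⟩
  apply ciInf_mono
  · refine ⟨0, ?_⟩
    rintro y ⟨l, rfl⟩
    exact Real.sqrt_nonneg _
  · intro l
    exact Real.sqrt_le_sqrt (hpt l.1 l.2)
end
end

section
/- General upper bound for the cumulative posterior standard deviations: assume k(x, x) ≤ 1 for all x ∈ X. Fix any integer T̄ ≥ 2 and let (λ_t)_{t ≥ T̄} be a sequence of strictly positive reals such that γ_t(λ_t²) ≤ (t − 1)/3 for every integer t ≥ T̄. Then for every T ∈ ℕ₊ and every sequence x₁, …, x_T ∈ X, ∑_{t=1}^T σ(x_t; X_{t−1}) ≤ (T̄ − 1) + ∑_{t=T̄}^T λ_t, where X_{t−1} = (x₁, …, x_{t−1}) and the last sum is empty when T < T̄. -/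
open Matrix

noncomputable section

section Lemmas

variable {X : Type*} (k : X → X → ℝ)

/-- auxiliary: PSD hypothesis gives nonnegative quadratic form of the gram matrix. -/
lemma quad_nonneg
    (hpsd : ∀ (n : ℕ) (xv : Fin n → X) (c : Fin n → ℝ),
      0 ≤ ∑ i, ∑ j, c i * c j * k (xv i) (xv j))
    {n : ℕ} (xs : Fin n → X) (c : Fin n → ℝ) :
    0 ≤ c ⬝ᵥ (gram k xs *ᵥ c) := by
  have h := hpsd n xs c
  calc (0:ℝ) ≤ ∑ i, ∑ j, c i * c j * k (xs i) (xs j) := h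
    _ = c ⬝ᵥ (gram k xs *ᵥ c) := by
        simp only [dotProduct, mulVec, _root_.gram, Finset.mul_sum]
        exact Finset.sum_congr rfl fun i _ => Finset.sum_congr rfl fun j _ => by ring

/-- auxiliary: nonnegativity of the augmented quadratic form. -/
lemma aug_nonneg
    (hsym : ∀ x y : X, k x y = k y x)
    (hpsd : ∀ (n : ℕ) (xv : Fin n → X) (c : Fin n → ℝ),
      0 ≤ ∑ i, ∑ j, c i * c j * k (xv i) (xv j))
    {n : ℕ} (xs : Fin n → X) (x : X) (c : Fin n → ℝ) :
    0 ≤ k x x - 2 * (c ⬝ᵥ kvec k xs x) + c ⬝ᵥ (gram k xs *ᵥ c) := by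
  have h := hpsd (n+1) (Fin.snoc xs x) (Fin.snoc (fun i => -(c i)) 1)
  simp only [Fin.sum_univ_castSucc, Fin.snoc_castSucc, Fin.snoc_last] at h
  have e1 : ∑ i, ∑ j, (-(c i)) * (-(c j)) * k (xs i) (xs j)
      = c ⬝ᵥ (gram k xs *ᵥ c) := by
    simp only [dotProduct, mulVec, _root_.gram, Finset.mul_sum]
    exact Finset.sum_congr rfl fun i _ => Finset.sum_congr rfl fun j _ => by ring
  have e2 : ∑ i, (-(c i)) * 1 * k (xs i) x = -(c ⬝ᵥ kvec k xs x) := by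
    simp only [dotProduct, kvec, ← Finset.sum_neg_distrib]
    exact Finset.sum_congr rfl fun i _ => by ring
  have e3 : ∑ j, 1 * (-(c j)) * k x (xs j) = -(c ⬝ᵥ kvec k xs x) := by
    simp only [dotProduct, kvec, ← Finset.sum_neg_distrib]
    exact Finset.sum_congr rfl fun i _ => by rw [hsym x (xs i)]; ring
  rw [Finset.sum_add_distrib, e1] at h
  rw [e3] at h
  -- h : 0 ≤ (c ⬝ᵥ gram c + ∑ i, -(c i) * 1 * k (xs i) x) + (-(c ⬝ᵥ kvec) + 1*1*k x x)
  rw [e2] at h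
  linarith [h]

end Lemmas

section Lemmas2

variable {X : Type*} (k : X → X → ℝ)

lemma dot_self_nonneg {n : ℕ} (c : Fin n → ℝ) : 0 ≤ c ⬝ᵥ c :=
  Finset.sum_nonneg fun i _ => mul_self_nonneg _

lemma M_quad {n : ℕ} (xs : Fin n → X) (l : ℝ) (c : Fin n → ℝ) :
    c ⬝ᵥ ((gram k xs + l ^ 2 • (1 : Matrix (Fin n) (Fin n) ℝ)) *ᵥ c)
      = c ⬝ᵥ (gram k xs *ᵥ c) + l ^ 2 * (c ⬝ᵥ c) := by
  rw [add_mulVec, dotProduct_add, smul_mulVec, one_mulVec, dotProduct_smul, smul_eq_mul]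

lemma M_posdef
    (hsym : ∀ x y : X, k x y = k y x)
    (hpsd : ∀ (n : ℕ) (xv : Fin n → X) (c : Fin n → ℝ),
      0 ≤ ∑ i, ∑ j, c i * c j * k (xv i) (xv j))
    {n : ℕ} (xs : Fin n → X) {l : ℝ} (hl : l ≠ 0) :
    (gram k xs + l ^ 2 • (1 : Matrix (Fin n) (Fin n) ℝ)).PosDef := by
  refine Matrix.PosDef.of_dotProduct_mulVec_pos ?_ ?_
  · show (gram k xs + l ^ 2 • (1 : Matrix (Fin n) (Fin n) ℝ))ᴴ = _
    ext i j
    simp [Matrix.conjTranspose_apply, Matrix.add_apply, Matrix.smul_apply, Matrix.one_apply,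
      _root_.gram, hsym (xs j) (xs i)]
    by_cases hij : i = j <;> simp [hij, Matrix.one_apply, eq_comm]
  · intro c hc
    have hstar : star c = c := by funext i; exact star_trivial _
    rw [hstar, M_quad]
    have h1 : 0 ≤ c ⬝ᵥ (gram k xs *ᵥ c) := quad_nonneg k hpsd xs c
    have h2 : 0 < c ⬝ᵥ c := by
      obtain ⟨i, hi⟩ := Function.ne_iff.mp hc
      exact Finset.sum_pos' (fun j _ => mul_self_nonneg _)
        ⟨i, Finset.mem_univ i, mul_self_pos.mpr hi⟩
    have h3 : 0 < l ^ 2 := by positivity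
    nlinarith

lemma M_isUnit
    (hsym : ∀ x y : X, k x y = k y x)
    (hpsd : ∀ (n : ℕ) (xv : Fin n → X) (c : Fin n → ℝ),
      0 ≤ ∑ i, ∑ j, c i * c j * k (xv i) (xv j))
    {n : ℕ} (xs : Fin n → X) {l : ℝ} (hl : l ≠ 0) :
    IsUnit (gram k xs + l ^ 2 • (1 : Matrix (Fin n) (Fin n) ℝ)).det :=
  isUnit_iff_ne_zero.mpr (ne_of_gt (M_posdef k hsym hpsd xs hl).det_pos)

lemma M_transpose (hsym : ∀ x y : X, k x y = k y x)
    {n : ℕ} (xs : Fin n → X) (l : ℝ) :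
    (gram k xs + l ^ 2 • (1 : Matrix (Fin n) (Fin n) ℝ))ᵀ
      = gram k xs + l ^ 2 • (1 : Matrix (Fin n) (Fin n) ℝ) := by
  ext i j
  simp only [Matrix.transpose_apply, Matrix.add_apply, Matrix.smul_apply, _root_.gram,
    hsym (xs j) (xs i)]
  by_cases hij : i = j <;> simp [hij, Matrix.one_apply, eq_comm]

lemma M_swap (hsym : ∀ x y : X, k x y = k y x)
    {n : ℕ} (xs : Fin n → X) (l : ℝ) (v w : Fin n → ℝ) :
    v ⬝ᵥ ((gram k xs + l ^ 2 • (1 : Matrix (Fin n) (Fin n) ℝ)) *ᵥ w)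
      = w ⬝ᵥ ((gram k xs + l ^ 2 • (1 : Matrix (Fin n) (Fin n) ℝ)) *ᵥ v) := by
  set M := gram k xs + l ^ 2 • (1 : Matrix (Fin n) (Fin n) ℝ) with hM
  calc v ⬝ᵥ (M *ᵥ w) = (Mᵀ *ᵥ v) ⬝ᵥ w := by
        rw [dotProduct_mulVec, Matrix.mulVec_transpose]
    _ = w ⬝ᵥ (M *ᵥ v) := by rw [M_transpose k hsym, dotProduct_comm]

end Lemmas2

section Lemmas3

variable {X : Type*} (k : X → X → ℝ)

lemma cstar_spec (hsym : ∀ x y : X, k x y = k y x)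
    (hpsd : ∀ (n : ℕ) (xv : Fin n → X) (c : Fin n → ℝ),
      0 ≤ ∑ i, ∑ j, c i * c j * k (xv i) (xv j)) {n : ℕ} (xs : Fin n → X) (x : X) {l : ℝ} (hl : l ≠ 0) :
    (gram k xs + l ^ 2 • (1 : Matrix (Fin n) (Fin n) ℝ)) *ᵥ
      ((gram k xs + l ^ 2 • (1 : Matrix (Fin n) (Fin n) ℝ))⁻¹ *ᵥ kvec k xs x)
      = kvec k xs x := by
  rw [mulVec_mulVec, Matrix.mul_nonsing_inv _ (M_isUnit k hsym hpsd xs hl), one_mulVec]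

/-- `postVar` equals the value of the regularized least-squares objective at the optimum. -/
lemma postVar_eq_F (hsym : ∀ x y : X, k x y = k y x)
    (hpsd : ∀ (n : ℕ) (xv : Fin n → X) (c : Fin n → ℝ),
      0 ≤ ∑ i, ∑ j, c i * c j * k (xv i) (xv j)) {n : ℕ} (xs : Fin n → X) (x : X) {l : ℝ} (hl : l ≠ 0) :
    postVar k xs l x
      = k x x - 2 * (((gram k xs + l ^ 2 • (1 : Matrix (Fin n) (Fin n) ℝ))⁻¹ *ᵥ kvec k xs x)
            ⬝ᵥ kvec k xs x)
        + (((gram k xs + l ^ 2 • (1 : Matrix (Fin n) (Fin n) ℝ))⁻¹ *ᵥ kvec k xs x)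
            ⬝ᵥ (gram k xs *ᵥ ((gram k xs + l ^ 2 • (1 : Matrix (Fin n) (Fin n) ℝ))⁻¹ *ᵥ kvec k xs x))
          + l ^ 2 * (((gram k xs + l ^ 2 • (1 : Matrix (Fin n) (Fin n) ℝ))⁻¹ *ᵥ kvec k xs x)
            ⬝ᵥ ((gram k xs + l ^ 2 • (1 : Matrix (Fin n) (Fin n) ℝ))⁻¹ *ᵥ kvec k xs x))) := by
  set M := gram k xs + l ^ 2 • (1 : Matrix (Fin n) (Fin n) ℝ) with hM
  set cs := M⁻¹ *ᵥ kvec k xs x with hcs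
  have h1 : cs ⬝ᵥ (gram k xs *ᵥ cs) + l ^ 2 * (cs ⬝ᵥ cs) = cs ⬝ᵥ (M *ᵥ cs) :=
    (M_quad k xs l cs).symm
  have h2 : M *ᵥ cs = kvec k xs x := cstar_spec k hsym hpsd xs x hl
  rw [h1, h2, postVar]
  have h3 : kvec k xs x ⬝ᵥ (M⁻¹ *ᵥ kvec k xs x) = cs ⬝ᵥ kvec k xs x := dotProduct_comm _ _
  rw [h3]; ring

/-- `postVar` is at most the value of the objective at any coefficient vector. -/
lemma postVar_le_F (hsym : ∀ x y : X, k x y = k y x)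
    (hpsd : ∀ (n : ℕ) (xv : Fin n → X) (c : Fin n → ℝ),
      0 ≤ ∑ i, ∑ j, c i * c j * k (xv i) (xv j)) {n : ℕ} (xs : Fin n → X) (x : X) {l : ℝ} (hl : l ≠ 0) (c : Fin n → ℝ) :
    postVar k xs l x
      ≤ k x x - 2 * (c ⬝ᵥ kvec k xs x)
        + (c ⬝ᵥ (gram k xs *ᵥ c) + l ^ 2 * (c ⬝ᵥ c)) := by
  set M := gram k xs + l ^ 2 • (1 : Matrix (Fin n) (Fin n) ℝ) with hM
  set cs := M⁻¹ *ᵥ kvec k xs x with hcs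
  rw [postVar_eq_F k hsym hpsd xs x hl]
  have hMcs : M *ᵥ cs = kvec k xs x := cstar_spec k hsym hpsd xs x hl
  have hcsF : cs ⬝ᵥ (gram k xs *ᵥ cs) + l ^ 2 * (cs ⬝ᵥ cs) = cs ⬝ᵥ kvec k xs x := by
    rw [← M_quad k xs l cs, hMcs]
  have hq : 0 ≤ (c - cs) ⬝ᵥ (M *ᵥ (c - cs)) := by
    rw [M_quad]
    have h1 := quad_nonneg k hpsd xs (c - cs)
    have h2 := dot_self_nonneg (c - cs)
    positivity
  have hexp : (c - cs) ⬝ᵥ (M *ᵥ (c - cs))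
      = c ⬝ᵥ (M *ᵥ c) - 2 * (c ⬝ᵥ kvec k xs x) + cs ⬝ᵥ kvec k xs x := by
    rw [Matrix.mulVec_sub, dotProduct_sub, sub_dotProduct,
      sub_dotProduct]
    have e1 : c ⬝ᵥ (M *ᵥ cs) = c ⬝ᵥ kvec k xs x := by rw [hMcs]
    have e2 : cs ⬝ᵥ (M *ᵥ c) = c ⬝ᵥ kvec k xs x := by
      rw [M_swap k hsym, hMcs]
    have e3 : cs ⬝ᵥ (M *ᵥ cs) = cs ⬝ᵥ kvec k xs x := by rw [hMcs]
    rw [e1, e2, e3]; ring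
  have hc : c ⬝ᵥ (M *ᵥ c) = c ⬝ᵥ (gram k xs *ᵥ c) + l ^ 2 * (c ⬝ᵥ c) := M_quad k xs l c
  linarith

lemma postVar_nonneg (hsym : ∀ x y : X, k x y = k y x)
    (hpsd : ∀ (n : ℕ) (xv : Fin n → X) (c : Fin n → ℝ),
      0 ≤ ∑ i, ∑ j, c i * c j * k (xv i) (xv j)) {n : ℕ} (xs : Fin n → X) (x : X) {l : ℝ} (hl : l ≠ 0) :
    0 ≤ postVar k xs l x := by
  rw [postVar_eq_F k hsym hpsd xs x hl]
  set cs := (gram k xs + l ^ 2 • (1 : Matrix (Fin n) (Fin n) ℝ))⁻¹ *ᵥ kvec k xs x with hcs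
  have h1 := aug_nonneg k hsym hpsd xs x cs
  have h2 : 0 ≤ l ^ 2 * (cs ⬝ᵥ cs) := by
    have := dot_self_nonneg cs; positivity
  linarith

lemma postVar_le_kself (hsym : ∀ x y : X, k x y = k y x)
    (hpsd : ∀ (n : ℕ) (xv : Fin n → X) (c : Fin n → ℝ),
      0 ≤ ∑ i, ∑ j, c i * c j * k (xv i) (xv j)) {n : ℕ} (xs : Fin n → X) (x : X) {l : ℝ} (hl : l ≠ 0) :
    postVar k xs l x ≤ k x x := by
  set M := gram k xs + l ^ 2 • (1 : Matrix (Fin n) (Fin n) ℝ) with hM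
  set cs := M⁻¹ *ᵥ kvec k xs x with hcs
  have hMcs : M *ᵥ cs = kvec k xs x := cstar_spec k hsym hpsd xs x hl
  have h1 : 0 ≤ cs ⬝ᵥ (M *ᵥ cs) := by
    rw [M_quad]
    have h2 := quad_nonneg k hpsd xs cs
    have h3 := dot_self_nonneg cs
    positivity
  rw [hMcs] at h1
  have : postVar k xs l x = k x x - kvec k xs x ⬝ᵥ (M⁻¹ *ᵥ kvec k xs x) := rfl
  rw [this, dotProduct_comm]
  linarith

end Lemmas3

section Lemmas4

variable {X : Type*} (k : X → X → ℝ)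

lemma ext_dot {p q : ℕ} (f : Fin p → Fin q) (c : Fin p → ℝ) (v : Fin q → ℝ) :
    (fun j => ∑ i, if f i = j then c i else 0) ⬝ᵥ v = ∑ i, c i * v (f i) := by
  simp only [dotProduct, Finset.sum_mul, ite_mul, zero_mul]
  rw [Finset.sum_comm]
  refine Finset.sum_congr rfl fun i _ => ?_
  rw [Finset.sum_ite_eq Finset.univ (f i) (fun j => c i * v j)]
  simp

lemma ext_apply {p q : ℕ} (f : Fin p → Fin q) (hf : Function.Injective f)
    (c : Fin p → ℝ) (i0 : Fin p) :
    (∑ i, if f i = f i0 then c i else 0) = c i0 := by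
  have h : ∀ i : Fin p, (f i = f i0) = (i = i0) :=
    fun i => propext ⟨fun h => hf h, fun h => h ▸ rfl⟩
  simp only [h]
  rw [Finset.sum_ite_eq' Finset.univ i0 c]
  simp

lemma postVar_mono (hsym : ∀ x y : X, k x y = k y x)
    (hpsd : ∀ (n : ℕ) (xv : Fin n → X) (c : Fin n → ℝ),
      0 ≤ ∑ i, ∑ j, c i * c j * k (xv i) (xv j))
    {p q : ℕ} (xs : Fin p → X) (ys : Fin q → X)
    (f : Fin p → Fin q) (hf : Function.Injective f) (hys : ∀ i, ys (f i) = xs i)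
    (x : X) {l : ℝ} (hl : l ≠ 0) :
    postVar k ys l x ≤ postVar k xs l x := by
  set cs := (gram k xs + l ^ 2 • (1 : Matrix (Fin p) (Fin p) ℝ))⁻¹ *ᵥ kvec k xs x with hcs
  set c' : Fin q → ℝ := fun j => ∑ i, if f i = j then cs i else 0 with hc'
  have hdot : ∀ v : Fin q → ℝ, c' ⬝ᵥ v = ∑ i, cs i * v (f i) := fun v => ext_dot f cs v
  have e1 : c' ⬝ᵥ kvec k ys x = cs ⬝ᵥ kvec k xs x := by
    rw [hdot]
    refine Finset.sum_congr rfl fun i _ => ?_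
    simp [kvec, hys i]
  have e2 : c' ⬝ᵥ c' = cs ⬝ᵥ cs := by
    rw [hdot]
    refine Finset.sum_congr rfl fun i _ => ?_
    rw [hc']
    simp only []
    rw [ext_apply f hf cs i]
  have e3 : c' ⬝ᵥ (gram k ys *ᵥ c') = cs ⬝ᵥ (gram k xs *ᵥ cs) := by
    rw [hdot]
    refine Finset.sum_congr rfl fun i _ => ?_
    congr 1
    have h1 : (gram k ys *ᵥ c') (f i) = (fun j' => gram k ys (f i) j') ⬝ᵥ c' := rfl
    rw [h1, dotProduct_comm, hdot]
    have h2 : (gram k xs *ᵥ cs) i = ∑ i', gram k xs i i' * cs i' := rfl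
    rw [h2]
    refine Finset.sum_congr rfl fun i' _ => ?_
    simp [_root_.gram, hys]
    ring
  calc postVar k ys l x
      ≤ k x x - 2 * (c' ⬝ᵥ kvec k ys x) + (c' ⬝ᵥ (gram k ys *ᵥ c') + l ^ 2 * (c' ⬝ᵥ c')) :=
        postVar_le_F k hsym hpsd ys x hl c'
    _ = k x x - 2 * (cs ⬝ᵥ kvec k xs x) + (cs ⬝ᵥ (gram k xs *ᵥ cs) + l ^ 2 * (cs ⬝ᵥ cs)) := by
        rw [e1, e2, e3]
    _ = postVar k xs l x := (postVar_eq_F k hsym hpsd xs x hl).symm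

lemma postStd_nonneg {n : ℕ} (xs : Fin n → X) (x : X) : 0 ≤ postStd k xs x :=
  Real.iInf_nonneg fun _ => Real.sqrt_nonneg _

lemma postStd_le_sqrt {n : ℕ} (xs : Fin n → X) (x : X) {l : ℝ} (hl : 0 < l) :
    postStd k xs x ≤ Real.sqrt (postVar k xs l x) := by
  refine ciInf_le ⟨0, ?_⟩ (⟨l, hl⟩ : {l : ℝ // 0 < l})
  rintro y ⟨w, rfl⟩
  exact Real.sqrt_nonneg _

lemma postStd_sq_le (hsym : ∀ x y : X, k x y = k y x)
    (hpsd : ∀ (n : ℕ) (xv : Fin n → X) (c : Fin n → ℝ),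
      0 ≤ ∑ i, ∑ j, c i * c j * k (xv i) (xv j))
    {n : ℕ} (xs : Fin n → X) (x : X) {l : ℝ} (hl : 0 < l) :
    postStd k xs x ^ 2 ≤ postVar k xs l x := by
  have h1 := postStd_le_sqrt k xs x hl
  have h2 := postStd_nonneg k xs x
  have h3 := postVar_nonneg k hsym hpsd xs x hl.ne'
  nlinarith [Real.sq_sqrt h3, Real.sqrt_nonneg (postVar k xs l x)]

lemma postStd_le_one (hsym : ∀ x y : X, k x y = k y x)
    (hpsd : ∀ (n : ℕ) (xv : Fin n → X) (c : Fin n → ℝ),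
      0 ≤ ∑ i, ∑ j, c i * c j * k (xv i) (xv j))
    (hk1 : ∀ x : X, k x x ≤ 1)
    {n : ℕ} (xs : Fin n → X) (x : X) :
    postStd k xs x ≤ 1 := by
  have h1 := postStd_le_sqrt k xs x one_pos
  have h2 := postVar_le_kself k hsym hpsd xs x one_ne_zero
  exact h1.trans (Real.sqrt_le_one.mpr (le_trans h2 (hk1 x)))

end Lemmas4

section Lemmas5

variable {X : Type*} (k : X → X → ℝ)

lemma det_gram_succ (hsym : ∀ x y : X, k x y = k y x)
    (hpsd : ∀ (n : ℕ) (xv : Fin n → X) (c : Fin n → ℝ),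
      0 ≤ ∑ i, ∑ j, c i * c j * k (xv i) (xv j))
    {p : ℕ} (w : Fin (p+1) → X) {l : ℝ} (hl : l ≠ 0) :
    (gram k w + l ^ 2 • (1 : Matrix (Fin (p+1)) (Fin (p+1)) ℝ)).det
      = (gram k (fun i : Fin p => w i.castSucc)
          + l ^ 2 • (1 : Matrix (Fin p) (Fin p) ℝ)).det
        * (l ^ 2 + postVar k (fun i : Fin p => w i.castSucc) l (w (Fin.last p))) := by
  set ws : Fin p → X := fun i => w i.castSucc with hws
  set A := gram k ws + l ^ 2 • (1 : Matrix (Fin p) (Fin p) ℝ) with hA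
  set kv := kvec k ws (w (Fin.last p)) with hkv
  haveI : Invertible A := Matrix.invertibleOfIsUnitDet _ (M_isUnit k hsym hpsd ws hl)
  have hlast : ∀ j0 : Fin 1, (finSumFinEquiv (Sum.inr j0) : Fin (p+1)) = Fin.last p := by
    intro j0
    have h0 : j0 = 0 := Subsingleton.elim _ _
    subst h0
    apply Fin.ext
    simp [finSumFinEquiv_apply_right, Fin.natAdd, Fin.last]
  have hleft : ∀ i : Fin p, (finSumFinEquiv (Sum.inl i) : Fin (p+1)) = i.castSucc := by
    intro i; rfl
  have hdet : (gram k w + l ^ 2 • 1 : Matrix (Fin (p+1)) (Fin (p+1)) ℝ).det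
      = ((gram k w + l ^ 2 • 1 : Matrix (Fin (p+1)) (Fin (p+1)) ℝ).submatrix
          finSumFinEquiv finSumFinEquiv).det :=
    (Matrix.det_submatrix_equiv_self _ _).symm
  have hsub : (gram k w + l ^ 2 • (1 : Matrix (Fin (p+1)) (Fin (p+1)) ℝ)).submatrix
        finSumFinEquiv finSumFinEquiv
      = Matrix.fromBlocks A (Matrix.of fun i (_ : Fin 1) => kv i)
          (Matrix.of fun (_ : Fin 1) j => kv j)
          (Matrix.of fun (_ : Fin 1) (_ : Fin 1) =>
            k (w (Fin.last p)) (w (Fin.last p)) + l ^ 2) := by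
    ext i j
    cases i with
    | inl i =>
      cases j with
      | inl j =>
        simp only [Matrix.submatrix_apply, hleft, Matrix.fromBlocks_apply₁₁, hA,
          Matrix.add_apply, Matrix.smul_apply, _root_.gram, hws, smul_eq_mul]
        by_cases hij : i = j
        · subst hij; simp [Matrix.one_apply]
        · rw [Matrix.one_apply_ne hij, Matrix.one_apply_ne (fun h => hij (Fin.castSucc_inj.mp h))]
      | inr j =>
        simp only [Matrix.submatrix_apply, hleft, hlast, Matrix.fromBlocks_apply₁₂,
          Matrix.add_apply, Matrix.smul_apply, _root_.gram, Matrix.of_apply, hkv, kvec, hws,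
          smul_eq_mul]
        rw [Matrix.one_apply_ne (Fin.castSucc_lt_last i).ne]
        ring
    | inr i =>
      cases j with
      | inl j =>
        simp only [Matrix.submatrix_apply, hleft, hlast, Matrix.fromBlocks_apply₂₁,
          Matrix.add_apply, Matrix.smul_apply, _root_.gram, Matrix.of_apply, hkv, kvec, hws,
          smul_eq_mul]
        rw [Matrix.one_apply_ne (Fin.castSucc_lt_last j).ne']
        rw [hsym (w (Fin.last p)) (w j.castSucc)]
        ring
      | inr j =>
        simp only [Matrix.submatrix_apply, hlast, Matrix.fromBlocks_apply₂₂,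
          Matrix.add_apply, Matrix.smul_apply, _root_.gram, Matrix.of_apply, smul_eq_mul]
        rw [Matrix.one_apply_eq]
        ring
  rw [hdet, hsub, Matrix.det_fromBlocks₁₁]
  congr 1
  rw [Matrix.det_fin_one, Matrix.invOf_eq_nonsing_inv]
  have hent : (Matrix.of (fun (_ : Fin 1) j => kv j) * A⁻¹
      * Matrix.of (fun i (_ : Fin 1) => kv i)) 0 0 = kv ⬝ᵥ (A⁻¹ *ᵥ kv) := by
    simp only [Matrix.mul_apply, Matrix.of_apply, dotProduct, mulVec, Finset.sum_mul,
      Finset.mul_sum]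
    rw [Finset.sum_comm]
    exact Finset.sum_congr rfl fun i _ => Finset.sum_congr rfl fun j _ => by ring
  rw [Matrix.sub_apply, hent]
  simp only [Matrix.of_apply]
  have hpv : postVar k ws l (w (Fin.last p))
      = k (w (Fin.last p)) (w (Fin.last p)) - kv ⬝ᵥ (A⁻¹ *ᵥ kv) := rfl
  rw [hpv]
  ring

lemma det_gram_prod (hsym : ∀ x y : X, k x y = k y x)
    (hpsd : ∀ (n : ℕ) (xv : Fin n → X) (c : Fin n → ℝ),
      0 ≤ ∑ i, ∑ j, c i * c j * k (xv i) (xv j))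
    {p : ℕ} (w : Fin p → X) {l : ℝ} (hl : l ≠ 0) :
    (gram k w + l ^ 2 • (1 : Matrix (Fin p) (Fin p) ℝ)).det
      = ∏ i : Fin p, (l ^ 2 + postVar k (pre w i) l (w i)) := by
  induction p with
  | zero => simp
  | succ p ih =>
    rw [det_gram_succ k hsym hpsd w hl, ih (fun i => w i.castSucc), Fin.prod_univ_castSucc]
    rfl

end Lemmas5

section Lemmas6

variable {X : Type*} (k : X → X → ℝ)

lemma exists_le (hsym : ∀ x y : X, k x y = k y x)
    (hpsd : ∀ (n : ℕ) (xv : Fin n → X) (c : Fin n → ℝ),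
      0 ≤ ∑ i, ∑ j, c i * c j * k (xv i) (xv j))
    {m T : ℕ} (hm : 2 ≤ m) {l : ℝ} (hl : 0 < l)
    (hmig : mig k m l ≤ ENNReal.ofReal (((m : ℝ) - 1) / 3))
    (xs : Fin T → X) (g : Fin m → Fin T) (hg : StrictMono g) :
    ∃ i : Fin m, postStd k (pre xs (g i)) (xs (g i)) ≤ l := by
  by_contra hcon
  push_neg at hcon
  set w : Fin m → X := fun i => xs (g i) with hw
  have hkey : ∀ i : Fin m, 2 * l ^ 2 ≤ l ^ 2 + postVar k (pre w i) l (w i) := by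
    intro i
    have h1 : postVar k (pre xs (g i)) l (xs (g i)) ≤ postVar k (pre w i) l (w i) := by
      have hdom : ∀ j : Fin i.1, j.1 < m := fun j => j.2.trans i.2
      refine postVar_mono k hsym hpsd (pre w i) (pre xs (g i))
        (fun j => ⟨(g ⟨j.1, hdom j⟩).1, ?_⟩) ?_ ?_ (w i) hl.ne'
      · exact hg (show (⟨j.1, hdom j⟩ : Fin m) < i from j.2)
      · intro j j' hjj'
        have hv := congrArg Fin.val hjj'
        have h3 := hg.injective (Fin.ext hv)
        have hv2 := congrArg Fin.val h3
        exact Fin.ext hv2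
      · intro j
        rfl
    have h2 : l ^ 2 < postStd k (pre xs (g i)) (xs (g i)) ^ 2 := by
      have h4 := hcon i
      nlinarith [postStd_nonneg k (pre xs (g i)) (xs (g i))]
    have h3 := postStd_sq_le k hsym hpsd (pre xs (g i)) (xs (g i)) hl
    linarith
  have hdetprod := det_gram_prod k hsym hpsd w hl.ne'
  have hdet_ge : (2 * l ^ 2) ^ m
      ≤ (gram k w + l ^ 2 • (1 : Matrix (Fin m) (Fin m) ℝ)).det := by
    rw [hdetprod]
    calc (2 * l ^ 2) ^ m = ∏ _i : Fin m, (2 * l ^ 2) := by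
          rw [Finset.prod_const, Finset.card_univ, Fintype.card_fin]
      _ ≤ _ := Finset.prod_le_prod (fun i _ => by positivity) (fun i _ => hkey i)
  have hl2 : (l ^ 2 : ℝ) ≠ 0 := by positivity
  have hscal : (1 : Matrix (Fin m) (Fin m) ℝ) + (l ^ 2)⁻¹ • gram k w
      = (l ^ 2)⁻¹ • (gram k w + l ^ 2 • (1 : Matrix (Fin m) (Fin m) ℝ)) := by
    rw [smul_add, smul_smul, inv_mul_cancel₀ hl2, one_smul, add_comm]
  have hdet2 : ((1 : Matrix (Fin m) (Fin m) ℝ) + (l ^ 2)⁻¹ • gram k w).det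
      = ((l ^ 2)⁻¹) ^ m * (gram k w + l ^ 2 • (1 : Matrix (Fin m) (Fin m) ℝ)).det := by
    rw [hscal, Matrix.det_smul, Fintype.card_fin]
  have hD : (2 : ℝ) ^ m ≤ ((1 : Matrix (Fin m) (Fin m) ℝ) + (l ^ 2)⁻¹ • gram k w).det := by
    rw [hdet2]
    calc (2 : ℝ) ^ m = ((l ^ 2)⁻¹) ^ m * (2 * l ^ 2) ^ m := by
          rw [← mul_pow]
          congr 1
          field_simp
      _ ≤ _ := mul_le_mul_of_nonneg_left hdet_ge (by positivity)
  have hm1 : (1 : ℝ) ≤ (m : ℝ) := by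
    have : (1 : ℕ) ≤ m := le_trans (by norm_num) hm
    exact_mod_cast this
  have hmig' : ENNReal.ofReal ((1/2) * Real.log
        (((1 : Matrix (Fin m) (Fin m) ℝ) + (l ^ 2)⁻¹ • gram k w).det))
      ≤ ENNReal.ofReal (((m : ℝ) - 1) / 3) :=
    le_trans (le_iSup (fun xs' : Fin m → X => ENNReal.ofReal
      ((1 / 2) * Real.log ((1 + (l ^ 2)⁻¹ • gram k xs').det))) w) hmig
  have hlog : (1/2) * Real.log (((1 : Matrix (Fin m) (Fin m) ℝ) + (l ^ 2)⁻¹ • gram k w).det)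
      ≤ ((m : ℝ) - 1) / 3 :=
    (ENNReal.ofReal_le_ofReal_iff (by linarith)).mp hmig'
  have h2m : (0 : ℝ) < 2 ^ m := by positivity
  have hloglog := Real.log_le_log h2m hD
  rw [Real.log_pow] at hloglog
  have hm0 : (0 : ℝ) ≤ (m : ℝ) := by positivity
  nlinarith [Real.log_two_gt_d9]

end Lemmas6

/-- General upper bound for the cumulative posterior standard deviations. -/
theorem sum_postStd_le
    {X : Type*} [Nonempty X] (k : X → X → ℝ)
    (hsym : ∀ x y : X, k x y = k y x)
    (hpsd : ∀ (n : ℕ) (xv : Fin n → X) (c : Fin n → ℝ),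
      0 ≤ ∑ i, ∑ j, c i * c j * k (xv i) (xv j))
    (hk1 : ∀ x : X, k x x ≤ 1)
    (Tbar : ℕ) (hTbar : 2 ≤ Tbar) (lam : ℕ → ℝ)
    (hlam_pos : ∀ t : ℕ, Tbar ≤ t → 0 < lam t)
    (hmig : ∀ t : ℕ, Tbar ≤ t →
      mig k t (lam t) ≤ ENNReal.ofReal (((t : ℝ) - 1) / 3)) :
    ∀ T : ℕ, 0 < T → ∀ xs : Fin T → X,
      ∑ t : Fin T, postStd k (pre xs t) (xs t) ≤
        ((Tbar : ℝ) - 1) + ∑ t ∈ Finset.Icc Tbar T, lam t := by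
  intro T hT xs
  set σ : Fin T → ℝ := fun t => postStd k (pre xs t) (xs t) with hσdef
  have hσ1 : ∀ t, σ t ≤ 1 := fun t => postStd_le_one k hsym hpsd hk1 _ _
  have hσ0 : ∀ t, 0 ≤ σ t := fun t => postStd_nonneg k _ _
  set π := Tuple.sort σ with hπ
  have hmono : Monotone (σ ∘ π) := Tuple.monotone_sort σ
  have hsum : ∑ t : Fin T, σ t = ∑ j : Fin T, σ (π j) := (Equiv.sum_comp π σ).symm
  have claim : ∀ j : Fin T, j.1 + Tbar ≤ T → σ (π j) ≤ lam (T - j.1) := by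
    intro j hj
    set m := T - j.1 with hm
    have hmT : Tbar ≤ m := by omega
    have hmm : 2 ≤ m := le_trans hTbar hmT
    have hjm : ∀ i : Fin m, j.1 + i.1 < T := by
      intro i
      have := i.2
      omega
    set A : Finset (Fin T) :=
      Finset.image (fun i : Fin m => π ⟨j.1 + i.1, hjm i⟩) Finset.univ with hA
    have hinj : Function.Injective (fun i : Fin m => π ⟨j.1 + i.1, hjm i⟩) := by
      intro a b hab
      have h1 := π.injective hab
      have hv := congrArg Fin.val h1
      simp only [] at hv
      exact Fin.ext (by omega)
    have hcard : A.card = m := by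
      rw [hA, Finset.card_image_of_injective _ hinj, Finset.card_univ, Fintype.card_fin]
    set e := A.orderIsoOfFin hcard with he
    have hgmono : StrictMono (fun i : Fin m => (e i : Fin T)) := by
      intro a b hab
      exact Subtype.coe_lt_coe.mpr (e.lt_iff_lt.mpr hab)
    obtain ⟨i, hi⟩ := exists_le k hsym hpsd hmm (hlam_pos m hmT) (hmig m hmT) xs
      (fun i => (e i : Fin T)) hgmono
    have hmem : (e i : Fin T) ∈ A := (e i).2
    obtain ⟨i0, _, hi0⟩ := Finset.mem_image.mp hmem
    have hσe : σ (π j) ≤ σ ((e i : Fin T)) := by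
      rw [← hi0]
      exact hmono (show j ≤ ⟨j.1 + i0.1, hjm i0⟩ from by
        rw [Fin.le_def]
        exact Nat.le_add_right _ _)
    exact le_trans hσe hi
  by_cases hTT : T < Tbar
  · have hIcc : Finset.Icc Tbar T = ∅ := Finset.Icc_eq_empty (by omega)
    rw [hIcc, Finset.sum_empty, add_zero]
    have hcT : (T : ℝ) ≤ (Tbar : ℝ) - 1 := by
      have : T + 1 ≤ Tbar := hTT
      have := (Nat.cast_le (α := ℝ)).mpr this
      push_cast at this
      linarith
    calc ∑ t : Fin T, σ t ≤ ∑ _t : Fin T, (1 : ℝ) := Finset.sum_le_sum fun t _ => hσ1 t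
      _ = T := by simp
      _ ≤ (Tbar : ℝ) - 1 := hcT
  · push_neg at hTT
    set sN : ℕ → ℝ := fun j => if h : j < T then σ (π ⟨j, h⟩) else 0 with hsN
    have hsum2 : ∑ j : Fin T, σ (π j) = ∑ j ∈ Finset.range T, sN j := by
      rw [← Fin.sum_univ_eq_sum_range sN T]
      refine Finset.sum_congr rfl fun i _ => ?_
      rw [hsN]
      simp only []
      rw [dif_pos i.2]
    have hT0 : T - Tbar + 1 ≤ T := by omega
    have hsplit : ∑ j ∈ Finset.range T, sN j
        = ∑ j ∈ Finset.range (T - Tbar + 1), sN j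
          + ∑ j ∈ Finset.Ico (T - Tbar + 1) T, sN j := by
      rw [Finset.sum_range_add_sum_Ico sN hT0]
    have partA : ∑ j ∈ Finset.range (T - Tbar + 1), sN j
        ≤ ∑ t ∈ Finset.Icc Tbar T, lam t := by
      have hterm : ∀ j ∈ Finset.range (T - Tbar + 1), sN j ≤ lam (T - j) := by
        intro j hj
        have hjr := Finset.mem_range.mp hj
        have hjT : j < T := by omega
        rw [hsN]
        simp only []
        rw [dif_pos hjT]
        exact claim ⟨j, hjT⟩ (show j + Tbar ≤ T by omega)
      calc ∑ j ∈ Finset.range (T - Tbar + 1), sN j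
          ≤ ∑ j ∈ Finset.range (T - Tbar + 1), lam (T - j) := Finset.sum_le_sum hterm
        _ = ∑ t ∈ Finset.Icc Tbar T, lam t := by
          refine Finset.sum_nbij' (fun j => T - j) (fun t => T - t) ?_ ?_ ?_ ?_ ?_
          · intro a ha
            have := Finset.mem_range.mp ha
            show T - a ∈ Finset.Icc Tbar T
            rw [Finset.mem_Icc]
            omega
          · intro a ha
            have := Finset.mem_Icc.mp ha
            show T - a ∈ Finset.range (T - Tbar + 1)
            rw [Finset.mem_range]
            omega
          · intro a ha
            have := Finset.mem_range.mp ha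
            show T - (T - a) = a
            omega
          · intro a ha
            have := Finset.mem_Icc.mp ha
            show T - (T - a) = a
            omega
          · intro a ha
            rfl
    have partB : ∑ j ∈ Finset.Ico (T - Tbar + 1) T, sN j ≤ (Tbar : ℝ) - 1 := by
      have hterm : ∀ j ∈ Finset.Ico (T - Tbar + 1) T, sN j ≤ 1 := by
        intro j _
        rw [hsN]
        simp only []
        split
        · exact hσ1 _
        · norm_num
      calc ∑ j ∈ Finset.Ico (T - Tbar + 1) T, sN j
          ≤ ∑ _j ∈ Finset.Ico (T - Tbar + 1) T, (1 : ℝ) := Finset.sum_le_sum hterm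
        _ = ((Finset.Ico (T - Tbar + 1) T).card : ℝ) := by
            rw [Finset.sum_const, nsmul_eq_mul, mul_one]
        _ = ((Tbar - 1 : ℕ) : ℝ) := by
            rw [Nat.card_Ico]
            congr 1
            omega
        _ = (Tbar : ℝ) - 1 := by
            have h1 : 1 ≤ Tbar := by omega
            push_cast [Nat.cast_sub h1]
            ring
    rw [hsum, hsum2, hsplit]
    linarith
end
end
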